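/- The function B₁(γ) = (2/π)·(γ²/(√γ − 1))·((√γ − 2)·sin(π/√γ))/((γ − 1)(2√γ − 1)) is strictly increasing on the interval [4, 9). -/

import Mathlib

open Real

noncomputable def Gfun (s : ℝ) : ℝ :=
  2 / π * ((s^5 - 2*s^4) / (2*s^4 - 3*s^3 - s^2 + 3*s - 1)) * Real.sin (π / s)

lemma Dpos {s : ℝ} (hs : 2 ≤ s) : 0 < 2*s^4 - 3*s^3 - s^2 + 3*s - 1 := by
  nlinarith [sq_nonneg (s-2), sq_nonneg s, pow_le_pow_left₀ (by norm_num : (0:ℝ) ≤ 2) hs 2]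

lemma keyIneq {s : ℝ} (hs : 2 ≤ s) :
    π * ((s^5 - 2*s^4) * (2*s^4 - 3*s^3 - s^2 + 3*s - 1)) <
      Real.sqrt 3 * (((5*s^4 - 8*s^3) * (2*s^4 - 3*s^3 - s^2 + 3*s - 1)
        - (s^5 - 2*s^4) * (8*s^3 - 9*s^2 - 2*s + 3)) * s^2) := by
  have hsq3 : (1.732 : ℝ) ≤ Real.sqrt 3 := by
    have h : (1.732:ℝ) = Real.sqrt (1.732^2) := (Real.sqrt_sq (by norm_num)).symm
    rw [h]
    exact Real.sqrt_le_sqrt (by norm_num)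
  have hpi : π < 3.15 := by linarith [Real.pi_lt_d2]
  set Q : ℝ := (5*s^4 - 8*s^3) * (2*s^4 - 3*s^3 - s^2 + 3*s - 1)
        - (s^5 - 2*s^4) * (8*s^3 - 9*s^2 - 2*s + 3) with hQ
  have hkey : (3.15:ℝ) * ((s^5 - 2*s^4) * (2*s^4 - 3*s^3 - s^2 + 3*s - 1))
      < 1.732 * (Q * s^2) := by
    have ht : 0 ≤ s - 2 := by linarith
    have hident : (1.732:ℝ) * (Q * s^2) - 3.15 * ((s^5 - 2*s^4) * (2*s^4 - 3*s^3 - s^2 + 3*s - 1))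
        = (124704/125) + (113364/25) * (s-2)^1 + (230812/25) * (s-2)^2 + (287162/25) * (s-2)^3
          + (1267062/125) * (s-2)^4 + (3431257/500) * (s-2)^5 + (71709/20) * (s-2)^6
          + (136969/100) * (s-2)^7 + (35031/100) * (s-2)^8 + (13147/250) * (s-2)^9
          + (433/125) * (s-2)^10 := by rw [hQ]; ring
    nlinarith [pow_nonneg ht 1, pow_nonneg ht 2, pow_nonneg ht 3, pow_nonneg ht 4,
      pow_nonneg ht 5, pow_nonneg ht 6, pow_nonneg ht 7, pow_nonneg ht 8,
      pow_nonneg ht 9, pow_nonneg ht 10]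
  have hND : 0 ≤ (s^5 - 2*s^4) * (2*s^4 - 3*s^3 - s^2 + 3*s - 1) := by
    have h1 : 0 ≤ s^5 - 2*s^4 := by nlinarith [pow_nonneg (by linarith : (0:ℝ) ≤ s) 4]
    exact mul_nonneg h1 (Dpos hs).le
  have hQs2 : 0 < Q * s^2 := by nlinarith
  calc π * ((s^5 - 2*s^4) * (2*s^4 - 3*s^3 - s^2 + 3*s - 1))
      ≤ 3.15 * ((s^5 - 2*s^4) * (2*s^4 - 3*s^3 - s^2 + 3*s - 1)) := by nlinarith
    _ < 1.732 * (Q * s^2) := hkey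
    _ ≤ Real.sqrt 3 * (Q * s^2) := by nlinarith

lemma hasDerivG {s : ℝ} (h2 : 2 < s) (h3 : s < 3) :
    HasDerivAt Gfun
      (2 / π * (((5*s^4 - 8*s^3) * (2*s^4 - 3*s^3 - s^2 + 3*s - 1)
          - (s^5 - 2*s^4) * (8*s^3 - 9*s^2 - 2*s + 3)) / (2*s^4 - 3*s^3 - s^2 + 3*s - 1)^2)
        * Real.sin (π / s)
      + 2 / π * ((s^5 - 2*s^4) / (2*s^4 - 3*s^3 - s^2 + 3*s - 1))
        * (Real.cos (π / s) * (π * -(s^2)⁻¹))) s := by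
  have hs0 : s ≠ 0 := by linarith
  have hD0 : 2*s^4 - 3*s^3 - s^2 + 3*s - 1 ≠ 0 := (Dpos h2.le).ne'
  have hN : HasDerivAt (fun x : ℝ => x^5 - 2*x^4) (5*s^4 - 8*s^3) s := by
    have := (hasDerivAt_pow 5 s).sub ((hasDerivAt_pow 4 s).const_mul (2:ℝ))
    exact this.congr_deriv (by push_cast; ring)
  have hD : HasDerivAt (fun x : ℝ => 2*x^4 - 3*x^3 - x^2 + 3*x - 1)
      (8*s^3 - 9*s^2 - 2*s + 3) s := by
    have := (((((hasDerivAt_pow 4 s).const_mul (2:ℝ)).sub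
      ((hasDerivAt_pow 3 s).const_mul (3:ℝ))).sub (hasDerivAt_pow 2 s)).add
      ((hasDerivAt_id s).const_mul (3:ℝ))).sub_const 1
    exact this.congr_deriv (by push_cast; ring)
  have hquot := hN.div hD hD0
  have hinner : HasDerivAt (fun x : ℝ => π / x) (π * -(s^2)⁻¹) s := by
    have := (hasDerivAt_inv hs0).const_mul π
    simpa [div_eq_mul_inv] using this
  have hsin : HasDerivAt (fun x : ℝ => Real.sin (π / x))
      (Real.cos (π / s) * (π * -(s^2)⁻¹)) s :=
    (Real.hasDerivAt_sin (π / s)).comp s hinner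
  have h := (hquot.const_mul (2/π)).mul hsin
  exact h

lemma derivGpos {s : ℝ} (h2 : 2 < s) (h3 : s < 3) :
    0 < 2 / π * (((5*s^4 - 8*s^3) * (2*s^4 - 3*s^3 - s^2 + 3*s - 1)
          - (s^5 - 2*s^4) * (8*s^3 - 9*s^2 - 2*s + 3)) / (2*s^4 - 3*s^3 - s^2 + 3*s - 1)^2)
        * Real.sin (π / s)
      + 2 / π * ((s^5 - 2*s^4) / (2*s^4 - 3*s^3 - s^2 + 3*s - 1))
        * (Real.cos (π / s) * (π * -(s^2)⁻¹)) := by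
  have hpi := Real.pi_pos
  have hs0 : (0:ℝ) < s := by linarith
  have hD : 0 < 2*s^4 - 3*s^3 - s^2 + 3*s - 1 := Dpos h2.le
  have hkey := keyIneq h2.le
  set Q : ℝ := (5*s^4 - 8*s^3) * (2*s^4 - 3*s^3 - s^2 + 3*s - 1)
        - (s^5 - 2*s^4) * (8*s^3 - 9*s^2 - 2*s + 3) with hQdef
  set N : ℝ := s^5 - 2*s^4 with hNdef
  set D : ℝ := 2*s^4 - 3*s^3 - s^2 + 3*s - 1 with hDdef
  -- bounds on the angle
  have ha1 : π / s ≤ π / 2 := by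
    apply div_le_div_of_nonneg_left hpi.le (by norm_num) h2.le
  have ha2 : π / 3 ≤ π / s := by
    apply div_le_div_of_nonneg_left hpi.le hs0 h3.le
  have hsin : Real.sqrt 3 / 2 ≤ Real.sin (π / s) := by
    rw [← Real.sin_pi_div_three]
    apply Real.strictMonoOn_sin.monotoneOn _ _ ha2
    · constructor <;> [linarith; linarith]
    · constructor <;> [linarith; linarith]
  have hcos : Real.cos (π / s) ≤ 1 / 2 := by
    rw [← Real.cos_pi_div_three]
    exact Real.cos_le_cos_of_nonneg_of_le_pi (by positivity) (by linarith) ha2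
  have hcos0 : 0 ≤ Real.cos (π / s) :=
    Real.cos_nonneg_of_mem_Icc ⟨by linarith, ha1⟩
  have hN0 : 0 ≤ N := by
    rw [hNdef]; nlinarith [pow_nonneg hs0.le 4]
  have hND : 0 ≤ N * D := mul_nonneg hN0 hD.le
  have hQs2 : 0 < Q * s^2 := by
    by_contra h
    push_neg at h
    have h1 : Real.sqrt 3 * (Q * s^2) ≤ 0 :=
      mul_nonpos_of_nonneg_of_nonpos (Real.sqrt_nonneg 3) h
    nlinarith [mul_nonneg hpi.le hND]
  -- rewrite the expression
  have hexpr : 2 / π * (Q / D^2) * Real.sin (π / s)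
      + 2 / π * (N / D) * (Real.cos (π / s) * (π * -(s^2)⁻¹))
      = 2 / π * ((Q * s^2 * Real.sin (π / s) - N * D * π * Real.cos (π / s)) / (D^2 * s^2)) := by
    field_simp
    ring
  rw [hexpr]
  apply mul_pos (by positivity)
  apply div_pos _ (by positivity)
  have h1 : Q * s^2 * (Real.sqrt 3 / 2) ≤ Q * s^2 * Real.sin (π / s) :=
    mul_le_mul_of_nonneg_left hsin hQs2.le
  have h2' : N * D * π * Real.cos (π / s) ≤ N * D * π * (1/2) := by
    apply mul_le_mul_of_nonneg_left hcos
    positivity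
  clear_value Q N D
  nlinarith
noncomputable section

lemma GstrictMono : StrictMonoOn Gfun (Set.Ico (2:ℝ) 3) := by
  apply strictMonoOn_of_deriv_pos (convex_Ico 2 3)
  · apply ContinuousOn.mul
    · apply ContinuousOn.mul continuousOn_const
      apply ContinuousOn.div (by fun_prop) (by fun_prop)
      intro s hs
      exact (Dpos hs.1).ne'
    · apply Real.continuous_sin.comp_continuousOn
      apply ContinuousOn.div continuousOn_const continuousOn_id
      intro s hs
      have : (2:ℝ) ≤ s := hs.1
      intro h; rw [id] at h; linarith
  · intro s hs
    rw [interior_Ico] at hs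
    rw [(hasDerivG hs.1 hs.2).deriv]
    exact derivGpos hs.1 hs.2

theorem stmt9 :
    StrictMonoOn (fun γ : ℝ =>
      (2 / π) * (γ ^ 2 / (Real.sqrt γ - 1)) *
        ((Real.sqrt γ - 2) * Real.sin (π / Real.sqrt γ)) /
        ((γ - 1) * (2 * Real.sqrt γ - 1)))
      (Set.Ico (4 : ℝ) 9) := by
  have hmem : ∀ γ : ℝ, γ ∈ Set.Ico (4:ℝ) 9 → Real.sqrt γ ∈ Set.Ico (2:ℝ) 3 := by
    intro γ hγ
    have h0 : (0:ℝ) ≤ γ := by linarith [hγ.1]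
    have hsq : Real.sqrt γ ^ 2 = γ := Real.sq_sqrt h0
    have hnn := Real.sqrt_nonneg γ
    constructor
    · nlinarith [hγ.1]
    · nlinarith [hγ.2]
  have heq : ∀ γ : ℝ, γ ∈ Set.Ico (4:ℝ) 9 →
      (2 / π) * (γ ^ 2 / (Real.sqrt γ - 1)) *
        ((Real.sqrt γ - 2) * Real.sin (π / Real.sqrt γ)) /
        ((γ - 1) * (2 * Real.sqrt γ - 1)) = Gfun (Real.sqrt γ) := by
    intro γ hγ
    have h0 : (0:ℝ) ≤ γ := by linarith [hγ.1]
    have hsq : Real.sqrt γ ^ 2 = γ := Real.sq_sqrt h0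
    obtain ⟨hs2, hs3⟩ := hmem γ hγ
    set s := Real.sqrt γ with hsdef
    have hpi := Real.pi_pos
    have hD : (0:ℝ) < 2*s^4 - 3*s^3 - s^2 + 3*s - 1 := Dpos hs2
    rw [← hsq, Gfun]
    have h1 : s - 1 ≠ 0 := by linarith
    have h2 : s^2 - 1 ≠ 0 := by nlinarith
    have h3 : 2*s - 1 ≠ 0 := by linarith
    have hDfac : 2*s^4 - 3*s^3 - s^2 + 3*s - 1 = (s^2 - 1) * (s - 1) * (2*s - 1) := by ring
    rw [hDfac]
    field_simp
  intro x hx y hy hxy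
  simp only
  rw [heq x hx, heq y hy]
  exact GstrictMono (hmem x hx) (hmem y hy)
    (Real.sqrt_lt_sqrt (by linarith [hx.1]) hxy)
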